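/- Let H^(1),…,H^(k) be finite-dimensional complex Hilbert spaces and let a be a Hermitian operator on H^(1)⊗…⊗H^(k). Then a is an entanglement witness if and only if the following three conditions all hold: (1) there exists a pure product state p with Tr(a p) > 0; (2) for every pure product state p with Tr(a p) = 0, the separable tangent space C(p) is contained in I_a = {x Hermitian : Tr(x†a) = 0}; (3) a is not positive semidefinite. -/

import Mathlib

open Matrix
open scoped ComplexOrder

namespace EWitness

/-- Operators on the tensor product `H⁽¹⁾ ⊗ ⋯ ⊗ H⁽ᵏ⁾` of finite-dimensional complex
Hilbert spaces (with `dim H⁽ⁱ⁾ = n i`), modeled as matrices indexed by tuples. -/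
abbrev Op {k : ℕ} (n : Fin k → ℕ) := Matrix (∀ i, Fin (n i)) (∀ i, Fin (n i)) ℂ

/-- Tensor (Kronecker) product of one operator per tensor factor. -/
def tensorOp {k : ℕ} (n : Fin k → ℕ) (A : ∀ i, Matrix (Fin (n i)) (Fin (n i)) ℂ) : Op n :=
  Matrix.of fun x y => ∏ i, A i (x i) (y i)

/-- Tensor product of one vector per tensor factor. -/
def tensorVec {k : ℕ} (n : Fin k → ℕ) (v : ∀ i, Fin (n i) → ℂ) : (∀ i, Fin (n i)) → ℂ :=
  fun x => ∏ i, v i (x i)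

/-- The rank one projector `|v⟩⟨v|`. -/
def proj {m : Type*} (v : m → ℂ) : Matrix m m ℂ := Matrix.vecMulVec v (star v)

/-- The trace inner product `(a,b) = Tr(a† b)` (its real part; on the real vector space of
Hermitian operators this is exactly the trace inner product, which is real-valued there). -/
noncomputable def tinner {m : Type*} [Fintype m] (a b : Matrix m m ℂ) : ℝ :=
  ((aᴴ * b).trace).re

/-- A state: a positive semidefinite trace-one operator. -/
noncomputable def IsState {m : Type*} [Fintype m] (ρ : Matrix m m ℂ) : Prop :=
  ρ.PosSemidef ∧ ρ.trace = 1

/-- A pure product state `⊗ᵢ |e⁽ⁱ⁾⟩⟨e⁽ⁱ⁾|` with the `e⁽ⁱ⁾` unit vectors. -/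
def IsPureProduct {k : ℕ} (n : Fin k → ℕ) (p : Op n) : Prop :=
  ∃ e : ∀ i, Fin (n i) → ℂ,
    (∀ i, star (e i) ⬝ᵥ e i = 1) ∧ p = tensorOp n fun i => proj (e i)

/-- A separable state: a finite convex combination of tensor products of states. -/
noncomputable def IsSeparable {k : ℕ} (n : Fin k → ℕ) (ϱ : Op n) : Prop :=
  ∃ (N : ℕ) (w : Fin N → ℝ) (ρ : Fin N → ∀ i, Matrix (Fin (n i)) (Fin (n i)) ℂ),
    (∀ j, 0 ≤ w j) ∧ ((∑ j, w j) = 1) ∧ (∀ j i, IsState (ρ j i)) ∧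
    ϱ = ∑ j, (w j : ℂ) • tensorOp n (ρ j)

/-- The generating set of `τ⁽ⁱ⁾`: operators `I ⊗ ⋯ ⊗ h⁽ⁱ⁾ ⊗ ⋯ ⊗ I`
with `h⁽ⁱ⁾` Hermitian and traceless. -/
def tauGen {k : ℕ} (n : Fin k → ℕ) (i : Fin k) : Set (Op n) :=
  {T | ∃ h : Matrix (Fin (n i)) (Fin (n i)) ℂ, h.IsHermitian ∧ h.trace = 0 ∧
      T = tensorOp n (Function.update (fun j => (1 : Matrix (Fin (n j)) (Fin (n j)) ℂ)) i h)}

/-- `τ⁽ⁱ⁾`: the real span of operators `I ⊗ ⋯ ⊗ h⁽ⁱ⁾ ⊗ ⋯ ⊗ I`. -/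
noncomputable def tauComp {k : ℕ} (n : Fin k → ℕ) (i : Fin k) : Submodule ℝ (Op n) :=
  Submodule.span ℝ (tauGen n i)

/-- `τ = span(⋃ᵢ τ⁽ⁱ⁾)`. -/
noncomputable def tau {k : ℕ} (n : Fin k → ℕ) : Submodule ℝ (Op n) :=
  Submodule.span ℝ (⋃ i, tauGen n i)

/-- The separable tangent space `C(p) = {i[p,t] : t ∈ τ}`. -/
def sepTangent {k : ℕ} (n : Fin k → ℕ) (p : Op n) : Set (Op n) :=
  {x | ∃ t ∈ tau n, x = Complex.I • (p * t - t * p)}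

/-- Condition (★): for every pure product state `p` orthogonal to `a`, the separable tangent
space `C(p)` is contained in the hyperplane `I_a = {x : (x,a) = 0}`. -/
def StarCond {k : ℕ} (n : Fin k → ℕ) (a : Op n) : Prop :=
  ∀ p : Op n, IsPureProduct n p → tinner a p = 0 →
    sepTangent n p ⊆ {x : Op n | tinner x a = 0}

/-- An operator is supported on a subspace `W` if it vanishes on the orthogonal
complement of `W` and its range is contained in `W`. -/
def SupportedOn {m : Type*} [Fintype m] (W : Submodule ℂ (m → ℂ)) (M : Matrix m m ℂ) : Prop :=
  (∀ v, M.mulVec v ∈ W) ∧ (∀ v, (∀ w ∈ W, star w ⬝ᵥ v = 0) → M.mulVec v = 0)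



set_option linter.unusedSectionVars false

section General

variable {m : Type*} [Fintype m]

/-- conj of a sesquilinear matrix form -/
lemma dot_conj (M : Matrix m m ℂ) (u v : m → ℂ) :
    (starRingEnd ℂ) (star u ⬝ᵥ M.mulVec v) = star v ⬝ᵥ Mᴴ.mulVec u := by
  simp only [dotProduct, mulVec, map_sum, _root_.map_mul, Pi.star_apply, Complex.star_def,
    Matrix.conjTranspose_apply, Complex.conj_conj, Finset.mul_sum]
  rw [Finset.sum_comm]
  apply Finset.sum_congr rfl
  intro x _
  apply Finset.sum_congr rfl
  intro y _
  ring

lemma dot_conj' (u v : m → ℂ) :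
    (starRingEnd ℂ) (star u ⬝ᵥ v) = star v ⬝ᵥ u := by
  simp only [dotProduct, map_sum, _root_.map_mul, Pi.star_apply, Complex.star_def, Complex.conj_conj]
  apply Finset.sum_congr rfl
  intro x _
  ring

lemma dot_self_eq (u : m → ℂ) :
    star u ⬝ᵥ u = ((∑ x, Complex.normSq (u x) : ℝ) : ℂ) := by
  push_cast
  apply Finset.sum_congr rfl
  intro x _
  simp [Pi.star_apply, mul_comm, Complex.mul_conj]

lemma dot_self_re_nonneg (u : m → ℂ) : 0 ≤ (star u ⬝ᵥ u).re := by
  rw [dot_self_eq]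
  simp only [Complex.ofReal_re]
  exact Finset.sum_nonneg fun x _ => Complex.normSq_nonneg _

lemma dot_self_re_pos (u : m → ℂ) (hu : u ≠ 0) : 0 < (star u ⬝ᵥ u).re := by
  rw [dot_self_eq]
  simp only [Complex.ofReal_re]
  obtain ⟨x, hx⟩ : ∃ x, u x ≠ 0 := by
    by_contra h; push_neg at h; exact hu (funext h)
  exact Finset.sum_pos' (fun y _ => Complex.normSq_nonneg _)
    ⟨x, Finset.mem_univ x, Complex.normSq_pos.2 hx⟩

lemma dot_self_im (u : m → ℂ) : (star u ⬝ᵥ u).im = 0 := by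
  rw [dot_self_eq]; simp

/-- trace of `|v⟩⟨u| M` -/
lemma trace_vecMulVec_mul (M : Matrix m m ℂ) (v u : m → ℂ) :
    (vecMulVec v (star u) * M).trace = star u ⬝ᵥ M.mulVec v := by
  simp only [Matrix.trace, Matrix.diag, Matrix.mul_apply, vecMulVec_apply, dotProduct, mulVec,
    Pi.star_apply]
  rw [Finset.sum_comm]
  apply Finset.sum_congr rfl
  intro x _
  rw [Finset.mul_sum]
  apply Finset.sum_congr rfl
  intro y _
  ring

lemma vecMulVec_conjTranspose (v u : m → ℂ) :
    (vecMulVec v (star u))ᴴ = vecMulVec u (star v) := by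
  ext x y
  simp [vecMulVec_apply, Matrix.conjTranspose_apply, mul_comm]

lemma vecMulVec_mulVec' (v u w : m → ℂ) :
    (vecMulVec v (star u)).mulVec w = (star u ⬝ᵥ w) • v := by
  funext x
  simp only [mulVec, dotProduct, vecMulVec_apply, Pi.smul_apply, smul_eq_mul, Pi.star_apply, Complex.star_def,
    Finset.sum_mul]
  apply Finset.sum_congr rfl
  intro y _
  ring

lemma trace_vecMulVec (v u : m → ℂ) :
    (vecMulVec v (star u)).trace = star u ⬝ᵥ v := by
  simp only [Matrix.trace, Matrix.diag, vecMulVec_apply, dotProduct, Pi.star_apply]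
  apply Finset.sum_congr rfl
  intro x _
  ring

/-- `Bᴴ * B` as a sum of projectors on (conjugated) rows. -/
lemma conjTranspose_mul_self_eq (B : Matrix m m ℂ) :
    Bᴴ * B = ∑ r : m, vecMulVec (star (B r)) (star (star (B r))) := by
  ext x y
  simp only [Matrix.mul_apply, Matrix.conjTranspose_apply, Finset.sum_apply,
    Matrix.sum_apply, vecMulVec_apply, Pi.star_apply, Complex.conj_conj, star_star]


end General

section Tensor
variable {k : ℕ} {n : Fin k → ℕ}

lemma tensorVec_update (e : ∀ i, Fin (n i) → ℂ) (i : Fin k) (x : Fin (n i) → ℂ) :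
    tensorVec n (Function.update e i x) =
      fun z => x (z i) * ∏ j ∈ Finset.univ.erase i, e j (z j) := by
  funext z
  rw [tensorVec, ← Finset.mul_prod_erase Finset.univ _ (Finset.mem_univ i)]
  congr 1
  · rw [Function.update_self]
  · apply Finset.prod_congr rfl
    intro j hj
    rw [Function.update_of_ne (Finset.ne_of_mem_erase hj)]

lemma tensorVec_eq_mul (e : ∀ i, Fin (n i) → ℂ) (i : Fin k) :
    tensorVec n e = fun z => e i (z i) * ∏ j ∈ Finset.univ.erase i, e j (z j) := by
  conv_lhs => rw [← Function.update_eq_self i e, tensorVec_update]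

lemma tensorVec_update_add (e : ∀ i, Fin (n i) → ℂ) (i : Fin k) (x y : Fin (n i) → ℂ) :
    tensorVec n (Function.update e i (x + y)) =
      tensorVec n (Function.update e i x) + tensorVec n (Function.update e i y) := by
  funext z
  simp only [tensorVec_update, Pi.add_apply]
  ring

lemma tensorVec_update_smul (e : ∀ i, Fin (n i) → ℂ) (i : Fin k) (c : ℂ) (x : Fin (n i) → ℂ) :
    tensorVec n (Function.update e i (c • x)) = c • tensorVec n (Function.update e i x) := by
  funext z
  simp only [tensorVec_update, Pi.smul_apply, smul_eq_mul]
  ring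

lemma tensorVec_smul (c : Fin k → ℂ) (e : ∀ i, Fin (n i) → ℂ) :
    tensorVec n (fun j => c j • e j) = (∏ j, c j) • tensorVec n e := by
  funext z
  simp only [tensorVec, Pi.smul_apply, smul_eq_mul, ← Finset.prod_mul_distrib]

lemma star_tensorVec (e : ∀ i, Fin (n i) → ℂ) :
    star (tensorVec n e) = tensorVec n (fun i => star (e i)) := by
  funext z
  simp only [tensorVec, Pi.star_apply, Complex.star_def, map_prod]

lemma tensorOp_proj (e : ∀ i, Fin (n i) → ℂ) :
    tensorOp n (fun i => proj (e i)) =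
      vecMulVec (tensorVec n e) (star (tensorVec n e)) := by
  ext x y
  simp only [tensorOp, Matrix.of_apply, proj, vecMulVec_apply, tensorVec, Pi.star_apply,
    Complex.star_def, map_prod, ← Finset.prod_mul_distrib]

lemma tensorOp_mulVec (A : ∀ i, Matrix (Fin (n i)) (Fin (n i)) ℂ) (e : ∀ i, Fin (n i) → ℂ) :
    (tensorOp n A).mulVec (tensorVec n e) = tensorVec n (fun j => (A j).mulVec (e j)) := by
  funext x
  simp only [mulVec, dotProduct, tensorOp, Matrix.of_apply, tensorVec]
  rw [Finset.prod_univ_sum, ← Fintype.piFinset_univ]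
  apply Finset.sum_congr rfl
  intro y _
  rw [Finset.prod_mul_distrib]

lemma tensorOp_conjTranspose (A : ∀ i, Matrix (Fin (n i)) (Fin (n i)) ℂ) :
    (tensorOp n A)ᴴ = tensorOp n (fun i => (A i)ᴴ) := by
  ext x y
  simp only [tensorOp, Matrix.conjTranspose_apply, Matrix.of_apply, Complex.star_def, map_prod]


end Tensor

section Forms
variable {k : ℕ} {n : Fin k → ℕ}

/-- The (real) value of the Hermitian form of `a` at the product vector of the tuple `e`. -/
noncomputable def Gform (a : Op n) (e : ∀ i, Fin (n i) → ℂ) : ℝ :=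
  (star (tensorVec n e) ⬝ᵥ a.mulVec (tensorVec n e)).re

lemma conj_mul_self (z : ℂ) : (starRingEnd ℂ) z * z = ((Complex.normSq z : ℝ) : ℂ) := by
  rw [mul_comm, Complex.mul_conj]

lemma tinner_tensor_proj (a : Op n) (ha : a.IsHermitian) (e : ∀ i, Fin (n i) → ℂ) :
    tinner a (tensorOp n fun i => proj (e i)) = Gform a e := by
  rw [tinner, ha.eq, tensorOp_proj, trace_mul_comm, trace_vecMulVec_mul, Gform]

lemma re_form_line {m : Type*} [Fintype m] (M : Matrix m m ℂ) (hM : M.IsHermitian)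
    (w d : m → ℂ) (s : ℝ) :
    (star (w + (s:ℂ) • d) ⬝ᵥ M.mulVec (w + (s:ℂ) • d)).re =
      (star w ⬝ᵥ M.mulVec w).re + s * (2 * (star d ⬝ᵥ M.mulVec w).re)
        + s ^ 2 * (star d ⬝ᵥ M.mulVec d).re := by
  have hc : star w ⬝ᵥ M.mulVec d = (starRingEnd ℂ) (star d ⬝ᵥ M.mulVec w) := by
    rw [dot_conj, hM.eq]
  rw [star_add, star_smul, add_dotProduct, smul_dotProduct, mulVec_add, mulVec_smul,
    dotProduct_add, dotProduct_add, dotProduct_smul, dotProduct_smul, hc]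
  simp only [Complex.star_def, Complex.conj_ofReal, smul_eq_mul, Complex.add_re,
    Complex.re_ofReal_mul, Complex.conj_re]
  ring

lemma Gform_update_smul (a : Op n) (e : ∀ i, Fin (n i) → ℂ) (i : Fin k) (c : ℂ)
    (x : Fin (n i) → ℂ) :
    Gform a (Function.update e i (c • x)) =
      Complex.normSq c * Gform a (Function.update e i x) := by
  rw [Gform, Gform, tensorVec_update_smul, star_smul, smul_dotProduct, mulVec_smul,
    dotProduct_smul]
  simp only [smul_eq_mul, Complex.star_def, ← mul_assoc, conj_mul_self,
    Complex.re_ofReal_mul]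

lemma Gform_smul (a : Op n) (c : Fin k → ℂ) (e : ∀ i, Fin (n i) → ℂ) :
    Gform a (fun j => c j • e j) = Complex.normSq (∏ j, c j) * Gform a e := by
  rw [Gform, Gform, tensorVec_smul, star_smul, smul_dotProduct, mulVec_smul, dotProduct_smul]
  simp only [smul_eq_mul, Complex.star_def, ← mul_assoc, conj_mul_self,
    Complex.re_ofReal_mul]

lemma tensorVec_zero_coord (e : ∀ i, Fin (n i) → ℂ) (i : Fin k) (h : e i = 0) :
    tensorVec n e = 0 := by
  funext z
  rw [tensorVec_eq_mul e i, h]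
  simp

lemma Gform_zero_coord (a : Op n) (e : ∀ i, Fin (n i) → ℂ) (i : Fin k) (h : e i = 0) :
    Gform a e = 0 := by
  rw [Gform, tensorVec_zero_coord e i h]
  simp

lemma exists_normalize (e : ∀ i, Fin (n i) → ℂ) (he : ∀ i, e i ≠ 0) :
    ∃ (f : ∀ i, Fin (n i) → ℂ) (c : Fin k → ℝ),
      (∀ i, star (f i) ⬝ᵥ f i = 1) ∧ (∀ i, 0 < c i) ∧ (∀ i, e i = (c i : ℂ) • f i) ∧
      (∀ i, f i ≠ 0) := by
  have hr : ∀ i, 0 < Real.sqrt ((star (e i) ⬝ᵥ e i).re) := fun i =>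
    Real.sqrt_pos.2 (dot_self_re_pos (e i) (he i))
  refine ⟨fun i => (((Real.sqrt ((star (e i) ⬝ᵥ e i).re))⁻¹ : ℝ) : ℂ) • e i,
    fun i => Real.sqrt ((star (e i) ⬝ᵥ e i).re), fun i => ?_, hr, fun i => ?_, fun i => ?_⟩
  · have h3 : (star (e i) ⬝ᵥ e i).re = ∑ x, Complex.normSq (e i x) := by
      rw [dot_self_eq]; simp
    have hRpos : (0:ℝ) < ∑ x, Complex.normSq (e i x) := h3 ▸ dot_self_re_pos (e i) (he i)
    have hs : Real.sqrt ((star (e i) ⬝ᵥ e i).re) * Real.sqrt ((star (e i) ⬝ᵥ e i).re)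
        = ∑ x, Complex.normSq (e i x) := by
      rw [h3]; exact Real.mul_self_sqrt hRpos.le
    rw [star_smul, smul_dotProduct, dotProduct_smul, dot_self_eq]
    simp only [smul_eq_mul, Complex.star_def, Complex.conj_ofReal, ← mul_assoc,
      Complex.ofReal_re]
    rw [← Complex.ofReal_mul, ← Complex.ofReal_mul, Complex.ofReal_eq_one]
    have hss : Real.sqrt (∑ x, Complex.normSq (e i x)) * Real.sqrt (∑ x, Complex.normSq (e i x))
        = ∑ x, Complex.normSq (e i x) := Real.mul_self_sqrt hRpos.le
    have hsne : Real.sqrt (∑ x, Complex.normSq (e i x)) ≠ 0 := by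
      nlinarith [hss]
    field_simp
    rw [Real.sq_sqrt hRpos.le]
  · rw [smul_smul, ← Complex.ofReal_mul, mul_inv_cancel₀ (ne_of_gt (hr i))]
    simp
  · exact smul_ne_zero (by simpa using (ne_of_gt (hr i))) (he i)

lemma proj_posSemidef {m : Type*} [Fintype m] (u : m → ℂ) : (proj u).PosSemidef := by
  refine .of_dotProduct_mulVec_nonneg ?_ ?_
  · exact vecMulVec_conjTranspose u u
  · intro x
    rw [proj, vecMulVec_mulVec', dotProduct_smul, smul_eq_mul, ← dot_conj' u x,
      Complex.mul_conj]
    exact Complex.zero_le_real.2 (Complex.normSq_nonneg _)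

lemma pureProduct_separable (p : Op n) (hp : IsPureProduct n p) : IsSeparable n p := by
  obtain ⟨e, hunit, rfl⟩ := hp
  refine ⟨1, fun _ => 1, fun _ i => proj (e i), fun _ => zero_le_one, by simp, ?_, by simp⟩
  intro _ i
  exact ⟨proj_posSemidef _, (EWitness.trace_vecMulVec (e i) (e i)).trans (hunit i)⟩

lemma Gform_nonneg_of_sep (a : Op n) (ha : a.IsHermitian)
    (Hsep : ∀ ϱ : Op n, IsSeparable n ϱ → 0 ≤ tinner a ϱ)
    (e : ∀ i, Fin (n i) → ℂ) : 0 ≤ Gform a e := by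
  by_cases he : ∀ i, e i ≠ 0
  · obtain ⟨f, c, hunit, hc, hecf, -⟩ := exists_normalize e he
    have h1 : 0 ≤ Gform a f := by
      rw [← tinner_tensor_proj a ha f]
      exact Hsep _ (pureProduct_separable _ ⟨f, hunit, rfl⟩)
    have h2 : Gform a e = Complex.normSq (∏ j, ((c j : ℝ) : ℂ)) * Gform a f := by
      conv_lhs => rw [show e = fun j => ((c j : ℝ) : ℂ) • f j from funext hecf]
      exact Gform_smul a _ f
    rw [h2]
    exact mul_nonneg (Complex.normSq_nonneg _) h1
  · push_neg at he
    obtain ⟨i, hi⟩ := he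
    rw [Gform_zero_coord a e i (not_not.1 (by simpa using hi))]

end Forms

section Tinner
variable {m : Type*} [Fintype m]

lemma tinner_add_left (x y a : Matrix m m ℂ) : tinner (x + y) a = tinner x a + tinner y a := by
  simp [tinner, Matrix.conjTranspose_add, Matrix.add_mul, Matrix.trace_add]

lemma tinner_zero_left (a : Matrix m m ℂ) : tinner 0 a = 0 := by
  simp [tinner]

lemma tinner_smul_real_left (r : ℝ) (x a : Matrix m m ℂ) :
    tinner (r • x) a = r * tinner x a := by
  simp [tinner, Matrix.conjTranspose_smul, Matrix.smul_mul, Matrix.trace_smul, Complex.smul_re]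

lemma tinner_add_right (a x y : Matrix m m ℂ) : tinner a (x + y) = tinner a x + tinner a y := by
  simp [tinner, Matrix.mul_add, Matrix.trace_add]

lemma tinner_smul_ofReal_right (r : ℝ) (a x : Matrix m m ℂ) :
    tinner a (((r : ℝ) : ℂ) • x) = r * tinner a x := by
  simp [tinner, Matrix.mul_smul, Matrix.trace_smul, Complex.re_ofReal_mul, smul_eq_mul]

lemma tinner_sum_right {ι : Type*} (a : Matrix m m ℂ) (s : Finset ι) (F : ι → Matrix m m ℂ) :
    tinner a (∑ j ∈ s, F j) = ∑ j ∈ s, tinner a (F j) := by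
  simp [tinner, Matrix.mul_sum, Matrix.trace_sum, Complex.re_sum]

lemma tinner_comm (x a : Matrix m m ℂ) : tinner x a = tinner a x := by
  rw [tinner, tinner, show xᴴ * a = (aᴴ * x)ᴴ by
    rw [Matrix.conjTranspose_mul, Matrix.conjTranspose_conjTranspose],
    Matrix.trace_conjTranspose]
  simp [Complex.star_def]

end Tinner

section Polar
variable {k : ℕ} {n : Fin k → ℕ}

lemma tensorVec_single (x : ∀ i, Fin (n i)) :
    tensorVec n (fun i => Pi.single (x i) (1:ℂ)) = Pi.single x 1 := by
  funext z
  rw [tensorVec]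
  by_cases hz : z = x
  · subst hz
    simp
  · obtain ⟨i, hi⟩ := Function.ne_iff.1 hz
    rw [Pi.single_eq_of_ne hz, Finset.prod_eq_zero (Finset.mem_univ i)
      (Pi.single_eq_of_ne hi 1)]

lemma star_pi_single (x : ∀ i, Fin (n i)) :
    star (Pi.single x 1 : (∀ i, Fin (n i)) → ℂ) = Pi.single x 1 := by
  funext z
  simp only [Pi.star_apply, Pi.single_apply, apply_ite (star : ℂ → ℂ), star_one, star_zero]

lemma eq_zero_of_forms (a : Op n)
    (h : ∀ e : ∀ i, Fin (n i) → ℂ, star (tensorVec n e) ⬝ᵥ a.mulVec (tensorVec n e) = 0) :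
    a = 0 := by
  have key : ∀ S : Finset (Fin k), ∀ u v : ∀ i, Fin (n i) → ℂ,
      (∀ j, j ∉ S → u j = v j) → star (tensorVec n u) ⬝ᵥ a.mulVec (tensorVec n v) = 0 := by
    intro S
    induction S using Finset.induction_on with
    | empty =>
      intro u v huv
      have huv' : u = v := funext fun j => huv j (Finset.notMem_empty j)
      rw [huv']
      exact h v
    | @insert i S' hi IH =>
      intro u v huv
      set β : (Fin (n i) → ℂ) → (Fin (n i) → ℂ) → ℂ := fun x y =>
        star (tensorVec n (Function.update u i x)) ⬝ᵥ
          a.mulVec (tensorVec n (Function.update v i y)) with hβ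
      have hdiag : ∀ x : Fin (n i) → ℂ, β x x = 0 := by
        intro x
        apply IH
        intro j hj
        by_cases hji : j = i
        · subst hji
          rw [Function.update_self, Function.update_self]
        · rw [Function.update_of_ne hji, Function.update_of_ne hji]
          exact huv j (by simp [hji, hj])
      have hexp : ∀ (x y : Fin (n i) → ℂ) (c : ℂ),
          β (x + c • y) (x + c • y) =
            β x x + c * β x y + (starRingEnd ℂ) c * β y x
              + (starRingEnd ℂ) c * (c * β y y) := by
        intro x y c
        simp only [hβ, tensorVec_update_add, tensorVec_update_smul, star_add, star_smul,
          add_dotProduct, smul_dotProduct, Matrix.mulVec_add, Matrix.mulVec_smul,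
          dotProduct_add, dotProduct_smul, smul_eq_mul, Complex.star_def]
        ring
      have hA : β (u i) (v i) + β (v i) (u i) = 0 := by
        have h0 := hdiag (u i + (1:ℂ) • v i)
        rw [hexp] at h0
        rw [hdiag, hdiag] at h0
        simpa using h0
      have hB : β (u i) (v i) = β (v i) (u i) := by
        have h0 := hdiag (u i + Complex.I • v i)
        rw [hexp] at h0
        rw [hdiag, hdiag] at h0
        simp only [Complex.conj_I] at h0
        have h3 : Complex.I * β (u i) (v i) = Complex.I * β (v i) (u i) := by
          linear_combination h0
        exact mul_left_cancel₀ Complex.I_ne_zero h3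
      have hfinal : β (u i) (v i) = 0 := by
        linear_combination hA / 2 + hB / 2
      simpa [hβ, Function.update_eq_self] using hfinal
  have hent : ∀ x y, a x y = 0 := by
    intro x y
    have hxy := key Finset.univ (fun i => Pi.single (x i) 1) (fun i => Pi.single (y i) 1)
      (fun j hj => absurd (Finset.mem_univ j) hj)
    rw [tensorVec_single, tensorVec_single, star_pi_single, Matrix.mulVec_single,
      single_dotProduct, one_mul] at hxy
    simpa using hxy
  ext x y
  simpa using hent x y

end Polar

section Commutator
variable {k : ℕ} {n : Fin k → ℕ}

lemma tinner_comm_formula (a T : Op n) (ha : a.IsHermitian) (hT : T.IsHermitian)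
    (v : (∀ i, Fin (n i)) → ℂ) :
    tinner (Complex.I • (vecMulVec v (star v) * T - T * vecMulVec v (star v))) a =
      -2 * (star v ⬝ᵥ (T * a).mulVec v).im := by
  set p := vecMulVec v (star v) with hpdef
  have hp : pᴴ = p := vecMulVec_conjTranspose v v
  set z := star v ⬝ᵥ (T * a).mulVec v with hz
  have hconj : star v ⬝ᵥ (a * T).mulVec v = (starRingEnd ℂ) z := by
    rw [hz, dot_conj, Matrix.conjTranspose_mul, ha.eq, hT.eq]
  rw [tinner]
  have h1 : (Complex.I • (p * T - T * p))ᴴ = (-Complex.I) • (T * p - p * T) := by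
    rw [Matrix.conjTranspose_smul, Matrix.conjTranspose_sub, Matrix.conjTranspose_mul,
      Matrix.conjTranspose_mul, hp, hT.eq]
    simp [Complex.star_def, Complex.conj_I]
  rw [h1, Matrix.smul_mul, Matrix.sub_mul, Matrix.trace_smul, Matrix.trace_sub]
  have h2 : (T * p * a).trace = (starRingEnd ℂ) z := by
    rw [mul_assoc, Matrix.trace_mul_comm, mul_assoc, hpdef, trace_vecMulVec_mul, ← hconj]
  have h3 : (p * T * a).trace = z := by
    rw [mul_assoc, hpdef, trace_vecMulVec_mul, hz]
  rw [h2, h3]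
  have h4 : (-Complex.I) • ((starRingEnd ℂ) z - z) = ((-2 * z.im : ℝ) : ℂ) := by
    rw [smul_eq_mul]
    have hsc := Complex.sub_conj z
    push_cast at hsc ⊢
    linear_combination Complex.I * hsc + (2 * (z.im : ℂ)) * Complex.I_sq
  rw [h4, Complex.ofReal_re]

end Commutator

section Deriv
variable {k : ℕ} {n : Fin k → ℕ}

lemma re_dot_ofReal_smul {m : Type*} [Fintype m] (M : Matrix m m ℂ) (r s : ℝ) (u v : m → ℂ) :
    (star ((r:ℂ) • u) ⬝ᵥ M.mulVec ((s:ℂ) • v)).re = r * s * (star u ⬝ᵥ M.mulVec v).re := by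
  rw [star_smul, smul_dotProduct, Matrix.mulVec_smul, dotProduct_smul]
  simp only [smul_eq_mul, Complex.star_def, Complex.conj_ofReal, ← mul_assoc]
  rw [← Complex.ofReal_mul, Complex.re_ofReal_mul]

/-- `a` Hermitian implies the form value is real, so a zero of `Gform` kills the form. -/
lemma form_eq_zero (a : Op n) (ha : a.IsHermitian) (e : ∀ i, Fin (n i) → ℂ)
    (hG : Gform a e = 0) :
    star (tensorVec n e) ⬝ᵥ a.mulVec (tensorVec n e) = 0 := by
  have him := dot_conj a (tensorVec n e) (tensorVec n e)
  rw [ha.eq] at him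
  have : (star (tensorVec n e) ⬝ᵥ a.mulVec (tensorVec n e)).im = 0 := by
    have := congrArg Complex.im him
    simp only [Complex.conj_im] at this
    linarith
  exact Complex.ext hG this

/-- the conversion `⟨v,(Ta)v⟩ = ⟨Tv, av⟩` for Hermitian `T`. -/
lemma z_conv {m : Type*} [Fintype m] (a T : Matrix m m ℂ) (hT : T.IsHermitian) (v : m → ℂ) :
    star v ⬝ᵥ (T * a).mulVec v = star (T.mulVec v) ⬝ᵥ a.mulVec v := by
  rw [Matrix.star_mulVec, hT.eq, ← Matrix.dotProduct_mulVec, Matrix.mulVec_mulVec]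

lemma tensorOp_update_one_mulVec (i : Fin k) (h : Matrix (Fin (n i)) (Fin (n i)) ℂ)
    (e : ∀ i, Fin (n i) → ℂ) :
    (tensorOp n (Function.update (fun j => (1 : Matrix (Fin (n j)) (Fin (n j)) ℂ)) i h)).mulVec
        (tensorVec n e) = tensorVec n (Function.update e i (h.mulVec (e i))) := by
  have hfam : (fun j => (Function.update (fun j => (1 : Matrix (Fin (n j)) (Fin (n j)) ℂ)) i h j).mulVec
      (e j)) = Function.update e i (h.mulVec (e i)) := by
    funext j
    by_cases hj : j = i
    · subst hj
      rw [Function.update_self, Function.update_self]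
    · rw [Function.update_of_ne hj, Function.update_of_ne hj, Matrix.one_mulVec]
  rw [tensorOp_mulVec, hfam]

lemma tensorOp_update_one_isHermitian (i : Fin k) (h : Matrix (Fin (n i)) (Fin (n i)) ℂ)
    (hh : h.IsHermitian) :
    (tensorOp n (Function.update (fun j => (1 : Matrix (Fin (n j)) (Fin (n j)) ℂ)) i h)).IsHermitian := by
  show _ᴴ = _
  rw [tensorOp_conjTranspose]
  have hfam : (fun j => (Function.update (fun j => (1 : Matrix (Fin (n j)) (Fin (n j)) ℂ)) i h j)ᴴ)
      = Function.update (fun j => (1 : Matrix (Fin (n j)) (Fin (n j)) ℂ)) i h := by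
    funext j
    by_cases hj : j = i
    · subst hj
      simp [Function.update_self, hh.eq]
    · simp [Function.update_of_ne hj]
  rw [hfam]

/-- Unit-vector version of the vanishing of directional derivatives at zeros,
from condition (★). -/
lemma deriv_zero_of_starCond_unit (a : Op n) (ha : a.IsHermitian) (hstar : StarCond n a)
    (f : ∀ i, Fin (n i) → ℂ) (hunit : ∀ i, star (f i) ⬝ᵥ f i = 1)
    (hG : Gform a f = 0) (i : Fin k) (w : Fin (n i) → ℂ) :
    (star (tensorVec n (Function.update f i w)) ⬝ᵥ a.mulVec (tensorVec n f)).re = 0 := by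
  classical
  set v := tensorVec n f with hv
  set μ := star (f i) ⬝ᵥ w with hμ
  set wp := w - μ • f i with hwp
  have hwp0 : star (f i) ⬝ᵥ wp = 0 := by
    rw [hwp, dotProduct_sub, dotProduct_smul, hunit i, ← hμ]
    simp
  have hwp0' : star wp ⬝ᵥ f i = 0 := by
    rw [← dot_conj' (f i) wp, hwp0, map_zero]
  -- decompose the direction
  have hw : w = wp + μ • f i := by
    rw [hwp]
    abel
  have hform0 : star v ⬝ᵥ a.mulVec v = 0 := form_eq_zero a ha f hG
  rw [hw, tensorVec_update_add, tensorVec_update_smul, Function.update_eq_self]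
  rw [star_add, star_smul, add_dotProduct, smul_dotProduct, ← hv, smul_eq_mul, hform0, mul_zero,
    add_zero]
  -- main part: the orthogonal direction, via (★)
  set t : Matrix (Fin (n i)) (Fin (n i)) ℂ :=
    Complex.I • (vecMulVec wp (star (f i)) - vecMulVec (f i) (star wp)) with ht
  have htherm : t.IsHermitian := by
    show _ᴴ = _
    rw [ht, Matrix.conjTranspose_smul, Matrix.conjTranspose_sub, vecMulVec_conjTranspose,
      vecMulVec_conjTranspose]
    simp only [Complex.star_def, Complex.conj_I]
    module
  have httr : t.trace = 0 := by
    rw [ht, Matrix.trace_smul, Matrix.trace_sub, trace_vecMulVec, trace_vecMulVec, hwp0, hwp0']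
    simp
  set T : Op n := tensorOp n (Function.update (fun j => (1 : Matrix (Fin (n j)) (Fin (n j)) ℂ)) i t)
    with hT
  have hTtau : T ∈ tau n :=
    Submodule.subset_span (Set.mem_iUnion.2 ⟨i, ⟨t, htherm, httr, rfl⟩⟩)
  have hTherm : T.IsHermitian := tensorOp_update_one_isHermitian i t htherm
  set p : Op n := tensorOp n (fun j => proj (f j)) with hp
  have hsc : tinner (Complex.I • (p * T - T * p)) a = 0 := by
    apply hstar p ⟨f, hunit, rfl⟩
    · rw [tinner_tensor_proj a ha f]
      exact hG
    · exact ⟨T, hTtau, rfl⟩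
  rw [hp, tensorOp_proj, ← hv, tinner_comm_formula a T ha hTherm v] at hsc
  -- compute T *ᵥ v
  have hTv : T.mulVec v = Complex.I • tensorVec n (Function.update f i wp) := by
    rw [hT, hv, tensorOp_update_one_mulVec, ← tensorVec_update_smul]
    rw [ht, Matrix.smul_mulVec, Matrix.sub_mulVec, vecMulVec_mulVec', vecMulVec_mulVec',
      hunit i, hwp0']
    simp
  rw [z_conv a T hTherm v, hTv] at hsc
  rw [star_smul, smul_dotProduct] at hsc
  simp only [Complex.star_def, Complex.conj_I, smul_eq_mul, neg_mul, Complex.neg_im,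
    Complex.mul_im, Complex.I_re, Complex.I_im, zero_mul, one_mul, zero_add] at hsc
  -- hsc : -2 * -(re ζ) = 0 roughly
  linarith [hsc]

/-- General version for arbitrary nonzero tuples. -/
lemma deriv_zero_of_starCond (a : Op n) (ha : a.IsHermitian) (hstar : StarCond n a)
    (e : ∀ i, Fin (n i) → ℂ) (he : ∀ i, e i ≠ 0) (hG : Gform a e = 0)
    (i : Fin k) (w : Fin (n i) → ℂ) :
    (star (tensorVec n (Function.update e i w)) ⬝ᵥ a.mulVec (tensorVec n e)).re = 0 := by
  classical
  obtain ⟨f, c, hunit, hcpos, hecf, hfne⟩ := exists_normalize e he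
  have hef : e = fun j => ((c j : ℝ) : ℂ) • f j := funext hecf
  have hGf : Gform a f = 0 := by
    have h1 : Gform a e = Complex.normSq (∏ j, ((c j : ℝ) : ℂ)) * Gform a f := by
      conv_lhs => rw [hef]
      exact Gform_smul a _ f
    have h2 : (0:ℝ) < Complex.normSq (∏ j, ((c j : ℝ) : ℂ)) := by
      rw [← Complex.ofReal_prod, Complex.normSq_ofReal]
      have := Finset.prod_pos (fun j _ => hcpos j) (s := Finset.univ)
      nlinarith
    have h3 : Complex.normSq (∏ j, ((c j : ℝ) : ℂ)) * Gform a f = 0 := by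
      rw [← h1, hG]
    exact (mul_eq_zero.1 h3).resolve_left h2.ne'
  -- scaling of the two tensor vectors
  have hupdate : Function.update e i w =
      fun j => ((if j = i then (1:ℝ) else c j : ℝ) : ℂ) • (Function.update f i w) j := by
    funext j
    by_cases hj : j = i
    · subst hj
      simp [Function.update_self]
    · simp [Function.update_of_ne hj, hj, hecf j]
  have h1 : tensorVec n (Function.update e i w) =
      ((∏ j, (if j = i then (1:ℝ) else c j) : ℝ) : ℂ) • tensorVec n (Function.update f i w) := by
    rw [hupdate, tensorVec_smul, Complex.ofReal_prod]
  have h2 : tensorVec n e = ((∏ j, c j : ℝ) : ℂ) • tensorVec n f := by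
    conv_lhs => rw [hef]
    rw [tensorVec_smul, Complex.ofReal_prod]
  rw [h1, h2, re_dot_ofReal_smul,
    deriv_zero_of_starCond_unit a ha hstar f hunit hGf i w, mul_zero]

end Deriv

section StarOfSep
variable {k : ℕ} {n : Fin k → ℕ}

lemma starCond_of_sep (a : Op n) (ha : a.IsHermitian)
    (Hsep : ∀ ϱ : Op n, IsSeparable n ϱ → 0 ≤ tinner a ϱ) : StarCond n a := by
  intro p hp hpz x hx
  obtain ⟨t, htmem, rfl⟩ := hx
  obtain ⟨e, hunit, rfl⟩ := hp
  set p : Op n := tensorOp n (fun i => proj (e i)) with hpdef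
  simp only [Set.mem_setOf_eq]
  induction htmem using Submodule.span_induction with
  | zero =>
    simp only [mul_zero, zero_mul, sub_zero, smul_zero, tinner_zero_left]
  | add T T' hT hT' ihT ihT' =>
    have hsplit : Complex.I • (p * (T + T') - (T + T') * p) =
        Complex.I • (p * T - T * p) + Complex.I • (p * T' - T' * p) := by
      rw [Matrix.mul_add, Matrix.add_mul, ← smul_add]
      congr 1
      abel
    rw [hsplit, tinner_add_left, ihT, ihT', add_zero]
  | smul r T hT ihT =>
    have hsplit : Complex.I • (p * (r • T) - (r • T) * p) =
        r • (Complex.I • (p * T - T * p)) := by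
      rw [mul_smul_comm, Matrix.smul_mul, ← smul_sub, smul_comm]
    rw [hsplit, tinner_smul_real_left, ihT, mul_zero]
  | mem T hTmem =>
    obtain ⟨i, hTi⟩ := Set.mem_iUnion.1 hTmem
    obtain ⟨h, hherm, htr0, rfl⟩ := hTi
    clear hTmem
    set T : Op n := tensorOp n (Function.update (fun j => (1 : Matrix (Fin (n j)) (Fin (n j)) ℂ)) i h)
      with hTdef
    have hTherm : T.IsHermitian := tensorOp_update_one_isHermitian i h hherm
    set v := tensorVec n e with hv
    rw [hpdef, tensorOp_proj, ← hv, tinner_comm_formula a T ha hTherm v]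
    -- suffices : the imaginary part vanishes
    rw [z_conv a T hTherm v]
    set V₁ := tensorVec n (Function.update e i (h.mulVec (e i))) with hV₁
    have hTv : T.mulVec v = V₁ := by
      rw [hTdef, hv, tensorOp_update_one_mulVec, hV₁]
    rw [hTv]
    -- the quadratic inequality
    have hG0 : Gform a e = 0 := by
      rw [← tinner_tensor_proj a ha e]
      exact hpz
    set d := Complex.I • V₁ with hd
    set B := 2 * (star d ⬝ᵥ a.mulVec v).re with hB
    set C := (star d ⬝ᵥ a.mulVec d).re with hC
    have hkey : ∀ s : ℝ, 0 ≤ s * B + s ^ 2 * C := by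
      intro s
      have h1 : 0 ≤ Gform a (Function.update e i
          (e i + ((s : ℂ) * Complex.I) • h.mulVec (e i))) :=
        Gform_nonneg_of_sep a ha Hsep _
      have h2 : tensorVec n (Function.update e i
          (e i + ((s : ℂ) * Complex.I) • h.mulVec (e i))) = v + (s : ℂ) • d := by
        rw [tensorVec_update_add, Function.update_eq_self, tensorVec_update_smul, ← hV₁,
          ← hv, ← smul_smul, ← hd]
      rw [Gform, h2, re_form_line a ha v d s] at h1
      have h3 : (star v ⬝ᵥ a.mulVec v).re = 0 := hG0
      rw [h3, ← hB, ← hC] at h1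
      linarith [h1]
    have hB0 : B = 0 := by
      by_contra hne
      have hD : (0:ℝ) < C ^ 2 + 1 := by positivity
      have h1 := hkey (-B / (C ^ 2 + 1))
      have h4 : 0 ≤ ((-B / (C ^ 2 + 1)) * B + (-B / (C ^ 2 + 1)) ^ 2 * C) * ((C ^ 2 + 1) ^ 2) :=
        mul_nonneg h1 (by positivity)
      have h5 : ((-B / (C ^ 2 + 1)) * B + (-B / (C ^ 2 + 1)) ^ 2 * C) * ((C ^ 2 + 1) ^ 2) =
          -(B ^ 2) * (C ^ 2 + 1) + B ^ 2 * C := by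
        field_simp
      rw [h5] at h4
      have hB2 : (0:ℝ) < B ^ 2 := by positivity
      nlinarith [h4, hB2, mul_nonneg (sq_nonneg (2 * C - 1)) hB2.le]
    -- B = 2 * im(star V₁ ⬝ᵥ a v)... convert
    have hBconv : B = 2 * (star V₁ ⬝ᵥ a.mulVec v).im := by
      rw [hB, hd, star_smul, smul_dotProduct]
      simp only [Complex.star_def, Complex.conj_I, smul_eq_mul, neg_mul, Complex.neg_re,
        Complex.mul_re, Complex.I_re, Complex.I_im, zero_mul, one_mul, zero_sub, neg_neg]
    rw [hBconv] at hB0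
    have : (star V₁ ⬝ᵥ a.mulVec v).im = 0 := by linarith
    rw [this, mul_zero]

end StarOfSep

section Core
variable {k : ℕ} {n : Fin k → ℕ}

/-- Quadratic expansion of `Gform` along a line in one tensor slot. -/
lemma slice_quad (a : Op n) (ha : a.IsHermitian) (z : ∀ j, Fin (n j) → ℂ) (i : Fin k)
    (u w : Fin (n i) → ℂ) (s : ℝ) :
    Gform a (Function.update z i (u + (s:ℂ) • w)) =
      Gform a (Function.update z i u)
      + s * (2 * (star (tensorVec n (Function.update z i w)) ⬝ᵥ
          a.mulVec (tensorVec n (Function.update z i u))).re)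
      + s ^ 2 * Gform a (Function.update z i w) := by
  rw [Gform, tensorVec_update_add, tensorVec_update_smul,
    re_form_line a ha (tensorVec n (Function.update z i u)) (tensorVec n (Function.update z i w)) s,
    Gform, Gform]

lemma core_no_sign_change (a : Op n) (ha : a.IsHermitian)
    (hD : ∀ e : ∀ i, Fin (n i) → ℂ, (∀ i, e i ≠ 0) → Gform a e = 0 →
      ∀ (i : Fin k) (w : Fin (n i) → ℂ),
        (star (tensorVec n (Function.update e i w)) ⬝ᵥ a.mulVec (tensorVec n e)).re = 0)
    (S : Finset (Fin k)) :
    ∀ e f : ∀ i, Fin (n i) → ℂ, (∀ j, j ∉ S → e j = f j) → (∀ j, e j ≠ 0) → (∀ j, f j ≠ 0) →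
      Gform a e < 0 → 0 < Gform a f → False := by
  classical
  induction S using Finset.induction_on with
  | empty =>
    intro e f hef he hf hneg hpos
    have hh : e = f := funext fun j => hef j (Finset.notMem_empty j)
    rw [hh] at hneg
    linarith
  | @insert i S' hiS IH =>
    intro e f hef he hf hneg hpos
    by_cases hdep : ∃ c : ℂ, f i = c • e i
    · -- degenerate case: the two i-th factors are parallel
      obtain ⟨c, hc⟩ := hdep
      have hcne : c ≠ 0 := by
        intro h0
        exact hf i (by rw [hc, h0, zero_smul])
      have hff : f = Function.update (Function.update f i (e i)) i (c • e i) := by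
        funext j
        by_cases hj : j = i
        · subst hj
          rw [Function.update_idem, Function.update_self, hc]
        · rw [Function.update_idem, Function.update_of_ne hj]
      have hval : Gform a f = Complex.normSq c * Gform a (Function.update f i (e i)) := by
        conv_lhs => rw [hff]
        rw [Gform_update_smul, Function.update_idem]
      have hpos' : 0 < Gform a (Function.update f i (e i)) := by
        have hnc : 0 < Complex.normSq c := Complex.normSq_pos.2 hcne
        nlinarith [hval ▸ hpos]
      refine IH e (Function.update f i (e i)) (fun j hj => ?_) he (fun j => ?_) hneg hpos'
      · by_cases hji : j = i
        · subst hji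
          rw [Function.update_self]
        · rw [Function.update_of_ne hji]
          exact hef j (by simp [Finset.mem_insert, hji, hj])
      · by_cases hji : j = i
        · subst hji
          rw [Function.update_self]
          exact he _
        · rw [Function.update_of_ne hji]
          exact hf j
    · -- main case : move along the segment `s ↦ e i + s • (f i - e i)` in slot `i`
      have hyne : ∀ s : ℝ, e i + (s:ℂ) • (f i - e i) ≠ 0 := by
        intro s h0
        rcases eq_or_ne s 0 with rfl | hs
        · apply he i
          simpa using h0
        · apply hdep
          have hsC : (s : ℂ) ≠ 0 := Complex.ofReal_ne_zero.2 hs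
          have h1 : (s : ℂ) • f i = ((s : ℂ) - 1) • e i := by
            apply sub_eq_zero.mp
            have hmod : (s:ℂ) • f i - ((s:ℂ) - 1) • e i = e i + (s:ℂ) • (f i - e i) := by
              module
            rw [hmod, h0]
          have h2 := congrArg (fun x => (s:ℂ)⁻¹ • x) h1
          simp only [smul_smul] at h2
          rw [inv_mul_cancel₀ hsC, one_smul, mul_comm] at h2
          exact ⟨_, h2⟩
      -- slice predicate
      have hSlf2 : ∀ j, j ∉ S' → j ≠ i → f j = e j := by
        intro j hjS hji
        exact (hef j (by simp [Finset.mem_insert, hji, hjS])).symm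
      -- nonvanishing of updated slices
      have hnz : ∀ (z : ∀ j, Fin (n j) → ℂ) (s : ℝ), (∀ j, j ≠ i → z j ≠ 0) →
          ∀ j, Function.update z i (e i + (s:ℂ) • (f i - e i)) j ≠ 0 := by
        intro z s hz j
        by_cases hj : j = i
        · subst hj
          rw [Function.update_self]
          exact hyne s
        · rw [Function.update_of_ne hj]
          exact hz j hj
      -- two slices with opposite strict signs at the same parameter value: contradiction by IH
      have hdisj : ∀ (s : ℝ) (z₁ z₂ : ∀ j, Fin (n j) → ℂ),
          (∀ j, j ≠ i → z₁ j ≠ 0) → (∀ j, j ∉ S' → j ≠ i → z₁ j = e j) →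
          (∀ j, j ≠ i → z₂ j ≠ 0) → (∀ j, j ∉ S' → j ≠ i → z₂ j = e j) →
          Gform a (Function.update z₁ i (e i + (s:ℂ) • (f i - e i))) < 0 →
          0 < Gform a (Function.update z₂ i (e i + (s:ℂ) • (f i - e i))) → False := by
        intro s z₁ z₂ hz₁ hz₁e hz₂ hz₂e hg₁ hg₂
        refine IH (Function.update z₁ i (e i + (s:ℂ) • (f i - e i)))
          (Function.update z₂ i (e i + (s:ℂ) • (f i - e i))) (fun j hj => ?_)
          (hnz z₁ s hz₁) (hnz z₂ s hz₂) hg₁ hg₂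
        by_cases hji : j = i
        · subst hji
          rw [Function.update_self, Function.update_self]
        · rw [Function.update_of_ne hji, Function.update_of_ne hji, hz₁e j hj hji,
            hz₂e j hj hji]
      by_cases hZ : ∃ s0 : ℝ, ∀ z : ∀ j, Fin (n j) → ℂ,
          (∀ j, j ≠ i → z j ≠ 0) → (∀ j, j ∉ S' → j ≠ i → z j = e j) →
          Gform a (Function.update z i (e i + (s0:ℂ) • (f i - e i))) = 0
      · -- rigid case: a common zero of all slices
        obtain ⟨s0, hs0⟩ := hZ
        -- vanishing first derivative for every slice
        have hder : ∀ z : ∀ j, Fin (n j) → ℂ,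
            (∀ j, j ≠ i → z j ≠ 0) → (∀ j, j ∉ S' → j ≠ i → z j = e j) →
            (2 * (star (tensorVec n (Function.update z i (f i - e i))) ⬝ᵥ
              a.mulVec (tensorVec n (Function.update z i (e i)))).re)
              + 2 * s0 * Gform a (Function.update z i (f i - e i)) = 0 := by
          intro z hz hze
          have hd := hD _ (hnz z s0 hz) (hs0 z hz hze) i (f i - e i)
          rw [Function.update_idem, tensorVec_update_add, tensorVec_update_smul,
            Matrix.mulVec_add, Matrix.mulVec_smul, dotProduct_add, dotProduct_smul,
            Complex.add_re, smul_eq_mul, Complex.re_ofReal_mul] at hd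
          have hGdef : Gform a (Function.update z i (f i - e i)) =
              (star (tensorVec n (Function.update z i (f i - e i))) ⬝ᵥ
                a.mulVec (tensorVec n (Function.update z i (f i - e i)))).re := rfl
          rw [hGdef]
          linarith [hd]
        -- value relation for every slice
        have hvalz : ∀ z : ∀ j, Fin (n j) → ℂ,
            (∀ j, j ≠ i → z j ≠ 0) → (∀ j, j ∉ S' → j ≠ i → z j = e j) →
            Gform a (Function.update z i (e i)) =
              Gform a (Function.update z i (f i - e i)) * s0 ^ 2 := by
          intro z hz hze
          have h1 := hs0 z hz hze
          rw [slice_quad a ha z i (e i) (f i - e i) s0] at h1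
          have h2 := hder z hz hze
          linear_combination h1 - s0 * h2
        -- evaluate both extreme slices at `s0 + 1`
        have hqe1 : Gform a (Function.update e i (e i + ((s0+1 : ℝ):ℂ) • (f i - e i))) =
            Gform a (Function.update e i (f i - e i)) := by
          rw [slice_quad a ha e i (e i) (f i - e i) (s0+1)]
          have h2 := hder e (fun j _ => he j) (fun _ _ _ => rfl)
          have h3 := hvalz e (fun j _ => he j) (fun _ _ _ => rfl)
          linear_combination h3 + (s0 + 1) * h2
        have hqf1 : Gform a (Function.update f i (e i + ((s0+1 : ℝ):ℂ) • (f i - e i))) =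
            Gform a (Function.update f i (f i - e i)) := by
          rw [slice_quad a ha f i (e i) (f i - e i) (s0+1)]
          have h2 := hder f (fun j _ => hf j) hSlf2
          have h3 := hvalz f (fun j _ => hf j) hSlf2
          linear_combination h3 + (s0 + 1) * h2
        -- sign of the leading coefficients
        have hCe : Gform a (Function.update e i (f i - e i)) < 0 := by
          have h3 := hvalz e (fun j _ => he j) (fun _ _ _ => rfl)
          rw [Function.update_eq_self] at h3
          nlinarith [h3, hneg, sq_nonneg s0]
        have hCf : 0 < Gform a (Function.update f i (f i - e i)) := by
          have h01 := slice_quad a ha f i (e i) (f i - e i) 1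
          have hupf : e i + ((1:ℝ):ℂ) • (f i - e i) = f i := by
            push_cast
            rw [one_smul]
            abel
          rw [hupf, Function.update_eq_self] at h01
          have h2 := hder f (fun j _ => hf j) hSlf2
          have h3 := hvalz f (fun j _ => hf j) hSlf2
          have hval1 : Gform a f =
              Gform a (Function.update f i (f i - e i)) * (1 - s0) ^ 2 := by
            linear_combination h01 + h3 + h2
          nlinarith [hval1, hpos, sq_nonneg (1 - s0)]
        exact hdisj (s0+1) e f (fun j _ => he j) (fun _ _ _ => rfl)
          (fun j _ => hf j) hSlf2 (by rw [hqe1]; exact hCe) (by rw [hqf1]; exact hCf)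
      · -- connectedness case
        push_neg at hZ
        have hcont : ∀ z : ∀ j, Fin (n j) → ℂ,
            Continuous fun s : ℝ => Gform a (Function.update z i (e i + (s:ℂ) • (f i - e i))) := by
          intro z
          have hfun : (fun s : ℝ => Gform a (Function.update z i (e i + (s:ℂ) • (f i - e i)))) =
              fun s : ℝ => Gform a (Function.update z i (e i))
                + s * (2 * (star (tensorVec n (Function.update z i (f i - e i))) ⬝ᵥ
                    a.mulVec (tensorVec n (Function.update z i (e i)))).re)
                + s ^ 2 * Gform a (Function.update z i (f i - e i)) :=
            funext fun s => slice_quad a ha z i (e i) (f i - e i) s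
          rw [hfun]
          exact (continuous_const.add (continuous_id.mul continuous_const)).add
            ((continuous_pow 2).mul continuous_const)
        set Apos : Set ℝ := {s | ∃ z : ∀ j, Fin (n j) → ℂ, ((∀ j, j ≠ i → z j ≠ 0) ∧
            (∀ j, j ∉ S' → j ≠ i → z j = e j)) ∧
            0 < Gform a (Function.update z i (e i + (s:ℂ) • (f i - e i)))} with hApos
        set Aneg : Set ℝ := {s | ∃ z : ∀ j, Fin (n j) → ℂ, ((∀ j, j ≠ i → z j ≠ 0) ∧
            (∀ j, j ∉ S' → j ≠ i → z j = e j)) ∧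
            Gform a (Function.update z i (e i + (s:ℂ) • (f i - e i))) < 0} with hAneg
        have hopenp : IsOpen Apos := by
          rw [isOpen_iff_mem_nhds]
          rintro s ⟨z, hz, hgz⟩
          have hc : ContinuousAt
              (fun u : ℝ => Gform a (Function.update z i (e i + (u:ℂ) • (f i - e i)))) s :=
            (hcont z).continuousAt
          exact Filter.mem_of_superset (hc.preimage_mem_nhds (Ioi_mem_nhds hgz))
            (fun u hu => ⟨z, hz, hu⟩)
        have hopenn : IsOpen Aneg := by
          rw [isOpen_iff_mem_nhds]
          rintro s ⟨z, hz, hgz⟩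
          have hc : ContinuousAt
              (fun u : ℝ => Gform a (Function.update z i (e i + (u:ℂ) • (f i - e i)))) s :=
            (hcont z).continuousAt
          exact Filter.mem_of_superset (hc.preimage_mem_nhds (Iio_mem_nhds hgz))
            (fun u hu => ⟨z, hz, hu⟩)
        have hdisj' : Disjoint Apos Aneg := by
          rw [Set.disjoint_left]
          rintro s ⟨z₂, hz₂, h₂⟩ ⟨z₁, hz₁, h₁⟩
          exact hdisj s z₁ z₂ hz₁.1 hz₁.2 hz₂.1 hz₂.2 h₁ h₂
        have hcover : (Set.univ : Set ℝ) ⊆ Apos ∪ Aneg := by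
          intro s _
          obtain ⟨z, hz, hze, hne0⟩ := hZ s
          rcases hne0.lt_or_gt with h | h
          · exact Or.inr ⟨z, ⟨hz, hze⟩, h⟩
          · exact Or.inl ⟨z, ⟨hz, hze⟩, h⟩
        have h0neg : (0:ℝ) ∈ Aneg := by
          refine ⟨e, ⟨fun j _ => he j, fun _ _ _ => rfl⟩, ?_⟩
          have hup : e i + ((0:ℝ):ℂ) • (f i - e i) = e i := by
            push_cast
            rw [zero_smul, add_zero]
          rw [hup, Function.update_eq_self]
          exact hneg
        have h1pos : (1:ℝ) ∈ Apos := by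
          refine ⟨f, ⟨fun j _ => hf j, hSlf2⟩, ?_⟩
          have hup : e i + ((1:ℝ):ℂ) • (f i - e i) = f i := by
            push_cast
            rw [one_smul]
            abel
          rw [hup, Function.update_eq_self]
          exact hpos
        rcases isPreconnected_univ.subset_or_subset hopenp hopenn hdisj' hcover with h | h
        · exact Set.disjoint_left.1 hdisj' (h (Set.mem_univ 0)) h0neg
        · exact Set.disjoint_left.1 hdisj' h1pos (h (Set.mem_univ 1))

end Core

section Assemble
variable {k : ℕ} {n : Fin k → ℕ}

lemma normalize_unit {m : Type*} [Fintype m] (v : m → ℂ) (hv : v ≠ 0) :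
    star ((((Real.sqrt ((star v ⬝ᵥ v).re))⁻¹ : ℝ) : ℂ) • v) ⬝ᵥ
      ((((Real.sqrt ((star v ⬝ᵥ v).re))⁻¹ : ℝ) : ℂ) • v) = 1 := by
  have h3 : (star v ⬝ᵥ v).re = ∑ x, Complex.normSq (v x) := by
    rw [dot_self_eq]
    simp
  have hRpos : (0:ℝ) < ∑ x, Complex.normSq (v x) := h3 ▸ dot_self_re_pos v hv
  rw [star_smul, smul_dotProduct, dotProduct_smul, dot_self_eq]
  simp only [smul_eq_mul, Complex.star_def, Complex.conj_ofReal, ← mul_assoc, Complex.ofReal_re]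
  rw [← Complex.ofReal_mul, ← Complex.ofReal_mul, Complex.ofReal_eq_one]
  have hss : Real.sqrt (∑ x, Complex.normSq (v x)) * Real.sqrt (∑ x, Complex.normSq (v x))
      = ∑ x, Complex.normSq (v x) := Real.mul_self_sqrt hRpos.le
  have hsne : Real.sqrt (∑ x, Complex.normSq (v x)) ≠ 0 := by
    nlinarith [hss]
  field_simp
  rw [Real.sq_sqrt hRpos.le]

lemma tinner_proj {m : Type*} [Fintype m] (a : Matrix m m ℂ) (ha : a.IsHermitian) (u : m → ℂ) :
    tinner a (proj u) = (star u ⬝ᵥ a.mulVec u).re := by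
  rw [tinner, ha.eq, proj, Matrix.trace_mul_comm, trace_vecMulVec_mul]

/-- Backward: positivity on all product vectors under conditions (1) and (★). -/
lemma Gform_nonneg_of_conditions (a : Op n) (ha : a.IsHermitian) (hstar : StarCond n a)
    (hex : ∃ p : Op n, IsPureProduct n p ∧ 0 < tinner a p) :
    ∀ z : ∀ i, Fin (n i) → ℂ, 0 ≤ Gform a z := by
  obtain ⟨p, ⟨e0, hunit0, rfl⟩, hp0⟩ := hex
  rw [tinner_tensor_proj a ha e0] at hp0
  have he0 : ∀ i, e0 i ≠ 0 := by
    intro i h0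
    rw [Gform_zero_coord a e0 i h0] at hp0
    exact lt_irrefl 0 hp0
  intro z
  by_cases hz : ∀ i, z i ≠ 0
  · by_contra hneg
    push_neg at hneg
    exact core_no_sign_change a ha
      (fun e he hG => deriv_zero_of_starCond a ha hstar e he hG)
      Finset.univ z e0 (fun j hj => absurd (Finset.mem_univ j) hj) hz he0 hneg hp0
  · push_neg at hz
    obtain ⟨i, hi⟩ := hz
    rw [Gform_zero_coord a z i (not_not.1 (by simpa using hi))]

/-- Backward: nonnegativity on separable states. -/
lemma tinner_sep_nonneg (a : Op n) (ha : a.IsHermitian)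
    (hG : ∀ z : ∀ i, Fin (n i) → ℂ, 0 ≤ Gform a z)
    (ϱ : Op n) (hϱ : IsSeparable n ϱ) : 0 ≤ tinner a ϱ := by
  obtain ⟨N, w, ρ, hw, -, hst, rfl⟩ := hϱ
  rw [tinner_sum_right]
  apply Finset.sum_nonneg
  intro j _
  rw [tinner_smul_ofReal_right]
  apply mul_nonneg (hw j)
  have hdecomp : ∀ i, ∃ B : Matrix (Fin (n i)) (Fin (n i)) ℂ, ρ j i = Bᴴ * B := fun i =>
    by open scoped MatrixOrder Matrix.Norms.L2Operator in
      exact CStarAlgebra.nonneg_iff_eq_star_mul_self.mp (hst j i).1.nonneg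
  choose B hB using hdecomp
  have hexp : tensorOp n (ρ j) = ∑ φ : ∀ i, Fin (n i),
      tensorOp n (fun i => proj (star (B i (φ i)))) := by
    ext x y
    simp only [tensorOp, Matrix.of_apply, Matrix.sum_apply]
    calc ∏ i, (ρ j i) (x i) (y i)
        = ∏ i, ∑ r, proj (star (B i r)) (x i) (y i) := by
          apply Finset.prod_congr rfl
          intro i _
          rw [hB i, conjTranspose_mul_self_eq]
          simp [Matrix.sum_apply, proj]
      _ = ∑ φ : ∀ i, Fin (n i), ∏ i, proj (star (B i (φ i))) (x i) (y i) := by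
          rw [Finset.prod_univ_sum, Fintype.piFinset_univ]
  rw [hexp, tinner_sum_right]
  apply Finset.sum_nonneg
  intro φ _
  rw [tinner_tensor_proj a ha]
  exact hG _

/-- Forward: a witness is not positive semidefinite. -/
lemma notPSD_of_witness (a : Op n) (ha : a.IsHermitian) (q : Op n) (hq : IsState q)
    (hlt : tinner a q < 0) : ¬ a.PosSemidef := by
  intro hPSD
  obtain ⟨Bq, hBq⟩ : ∃ B : Op n, q = Bᴴ * B := by
    open scoped MatrixOrder Matrix.Norms.L2Operator in
    exact CStarAlgebra.nonneg_iff_eq_star_mul_self.mp hq.1.nonneg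
  have hge : 0 ≤ tinner a q := by
    rw [tinner, ha.eq, hBq, conjTranspose_mul_self_eq, Matrix.mul_sum, Matrix.trace_sum,
      Complex.re_sum]
    apply Finset.sum_nonneg
    intro r _
    rw [Matrix.trace_mul_comm, trace_vecMulVec_mul]
    have h2 := hPSD.dotProduct_mulVec_nonneg (star (Bq r))
    rw [Complex.le_def] at h2
    simpa using h2.1
  linarith

/-- Forward: existence of a strictly positive pure product value. -/
lemma exists_pos_pureProduct (a : Op n) (ha : a.IsHermitian)
    (Hsep : ∀ ϱ : Op n, IsSeparable n ϱ → 0 ≤ tinner a ϱ)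
    (q : Op n) (hq : IsState q) (hlt : tinner a q < 0) :
    ∃ p : Op n, IsPureProduct n p ∧ 0 < tinner a p := by
  by_contra hno
  push_neg at hno
  have hzero : ∀ e : ∀ i, Fin (n i) → ℂ,
      star (tensorVec n e) ⬝ᵥ a.mulVec (tensorVec n e) = 0 := by
    intro e
    by_cases he : ∀ i, e i ≠ 0
    · obtain ⟨f, c, hunit, hc, hecf, -⟩ := exists_normalize e he
      have h1 : Gform a f = 0 := by
        have hle := hno (tensorOp n fun i => proj (f i)) ⟨f, hunit, rfl⟩
        have hge := Hsep _ (pureProduct_separable _ ⟨f, hunit, rfl⟩)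
        rw [tinner_tensor_proj a ha f] at hle hge
        linarith
      have h2 : Gform a e = 0 := by
        rw [show e = fun j => ((c j : ℝ) : ℂ) • f j from funext hecf, Gform_smul, h1, mul_zero]
      exact form_eq_zero a ha e h2
    · push_neg at he
      obtain ⟨i, hi⟩ := he
      rw [tensorVec_zero_coord e i (not_not.1 (by simpa using hi))]
      simp
  have ha0 := eq_zero_of_forms a hzero
  rw [ha0] at hlt
  have h0 : tinner (0 : Op n) q = 0 := by
    simp [tinner]
  linarith

/-- Backward: a non-PSD operator has a state with negative expectation. -/
lemma exists_neg_state (a : Op n) (ha : a.IsHermitian) (hnpsd : ¬ a.PosSemidef) :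
    ∃ q : Op n, IsState q ∧ tinner a q < 0 := by
  have hnot : ¬ ∀ x, (0:ℂ) ≤ star x ⬝ᵥ a.mulVec x := fun h => hnpsd (.of_dotProduct_mulVec_nonneg ha h)
  push_neg at hnot
  obtain ⟨v, hv⟩ := hnot
  have hvne : v ≠ 0 := by
    intro h0
    apply hv
    rw [h0]
    simp
  have hreal : (star v ⬝ᵥ a.mulVec v).im = 0 := by
    have hcj := dot_conj a v v
    rw [ha.eq] at hcj
    have him := congrArg Complex.im hcj
    simp only [Complex.conj_im] at him
    linear_combination (-1/2 : ℝ) * him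
  have hneg : (star v ⬝ᵥ a.mulVec v).re < 0 := by
    by_contra hge
    push_neg at hge
    apply hv
    rw [Complex.le_def]
    constructor
    · simpa using hge
    · simp [hreal]
  set c : ℂ := (((Real.sqrt ((star v ⬝ᵥ v).re))⁻¹ : ℝ) : ℂ) with hcdef
  refine ⟨proj (c • v), ⟨proj_posSemidef _, ?_⟩, ?_⟩
  · rw [proj, trace_vecMulVec]
    exact normalize_unit v hvne
  · rw [tinner_proj a ha, hcdef, re_dot_ofReal_smul]
    have hrpos : 0 < Real.sqrt ((star v ⬝ᵥ v).re) :=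
      Real.sqrt_pos.2 (dot_self_re_pos v hvne)
    have hip : 0 < (Real.sqrt ((star v ⬝ᵥ v).re))⁻¹ := inv_pos.2 hrpos
    exact mul_neg_of_pos_of_neg (mul_pos hip hip) hneg

end Assemble

/-- main theorem.  A Hermitian operator `a` on `H⁽¹⁾ ⊗ ⋯ ⊗ H⁽ᵏ⁾` is an
entanglement witness (`Tr(a ϱ) ≥ 0` for all separable states `ϱ` and `Tr(a q) < 0` for at
least one state `q`) if and only if: (1) there is a pure product state `p` with
`Tr(a p) > 0`; (2) condition (★) holds: for every pure product state `p` with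
`Tr(a p) = 0`, `C(p) ⊆ I_a`; and (3) `a` is not positive semidefinite. -/
theorem isEntanglementWitness_iff {k : ℕ} (n : Fin k → ℕ)
    (a : Op n) (ha : a.IsHermitian) :
    ((∀ ϱ : Op n, IsSeparable n ϱ → 0 ≤ tinner a ϱ) ∧
      ∃ q : Op n, IsState q ∧ tinner a q < 0) ↔
    ((∃ p : Op n, IsPureProduct n p ∧ 0 < tinner a p) ∧
      StarCond n a ∧ ¬ a.PosSemidef) := by
  constructor
  · rintro ⟨Hsep, q, hq, hlt⟩
    exact ⟨exists_pos_pureProduct a ha Hsep q hq hlt, starCond_of_sep a ha Hsep,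
      notPSD_of_witness a ha q hq hlt⟩
  · rintro ⟨hex, hstar, hnpsd⟩
    have hG := Gform_nonneg_of_conditions a ha hstar hex
    exact ⟨fun ϱ hϱ => tinner_sep_nonneg a ha hG ϱ hϱ, exists_neg_state a ha hnpsd⟩

end EWitness
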